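/- For every δ > 0 there exists ε > 0 such that for every n ≥ 1 and every finite simple graph G on n vertices containing fewer than ε n³ triangles, one can delete at most δ n² edges from G to obtain a graph G' containing no triangles at all. -/

import Mathlib

/-- **Triangle removal lemma.** For every `δ > 0` there is `ε > 0` such that any
graph on `n` vertices with fewer than `ε n³` triangles can be made
triangle-free by deleting at most `δ n²` edges. -/
theorem triangle_removal (δ : ℝ) (hδ : 0 < δ) :
    ∃ ε : ℝ, 0 < ε ∧ ∀ (n : ℕ), 1 ≤ n → ∀ G : SimpleGraph (Fin n),
      ((G.cliqueSet 3).ncard : ℝ) < ε * (n : ℝ) ^ 3 →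
      ∃ G' : SimpleGraph (Fin n), G' ≤ G ∧ G'.CliqueFree 3 ∧
        ((G.edgeSet \ G'.edgeSet).ncard : ℝ) ≤ δ * (n : ℝ) ^ 2 := by
  classical
  set δ' : ℝ := min δ 1 with hδ'
  have hδ'0 : 0 < δ' := lt_min hδ one_pos
  have hδ'1 : δ' ≤ 1 := min_le_right _ _
  refine ⟨SimpleGraph.triangleRemovalBound δ',
    SimpleGraph.triangleRemovalBound_pos hδ'0, fun n hn G hG ↦ ?_⟩
  haveI : DecidableRel G.Adj := Classical.decRel _
  have hcard : (Fintype.card (Fin n) : ℝ) = n := by simp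
  have hset : (G.cliqueSet 3).ncard = (G.cliqueFinset 3).card := by
    rw [← SimpleGraph.coe_cliqueFinset]
    exact Set.ncard_coe_finset _
  have hG' : (G.cliqueFinset 3).card <
      SimpleGraph.triangleRemovalBound δ' * (Fintype.card (Fin n)) ^ 3 := by
    rw [hcard]; rwa [hset] at hG
  obtain ⟨G', hle, _, hedge, hfree⟩ := SimpleGraph.triangle_removal hG'
  refine ⟨G', hle, hfree, ?_⟩
  have hsub : G'.edgeSet ⊆ G.edgeSet := SimpleGraph.edgeSet_mono hle
  have hdiff : (G.edgeSet \ G'.edgeSet).ncard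
      = G.edgeFinset.card - G'.edgeFinset.card := by
    rw [← Set.ncard_coe_finset, ← Set.ncard_coe_finset, ← Set.ncard_diff]
    · simp [Set.diff_eq]
    · simpa using hsub
  have hle' : G'.edgeFinset.card ≤ G.edgeFinset.card := by
    apply Finset.card_le_card
    intro e he
    simp only [SimpleGraph.mem_edgeFinset] at *
    exact hsub he
  have : ((G.edgeSet \ G'.edgeSet).ncard : ℝ)
      = (G.edgeFinset.card : ℝ) - G'.edgeFinset.card := by
    rw [hdiff]; push_cast [hle']; ring
  rw [this]
  calc (G.edgeFinset.card : ℝ) - G'.edgeFinset.card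
      ≤ δ' * ((Fintype.card (Fin n)) ^ 2 : ℕ) := hedge.le
    _ ≤ δ * (n : ℝ) ^ 2 := by
        rw [Fintype.card_fin]; push_cast
        gcongr
        exact min_le_left _ _
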